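/- Let f : [0,1] × ℝ → ℝ be continuous, and let Φ be the class of nondecreasing functions φ : [0,∞) → [0,∞) such that for all ε > 0 there exists δ > 0 with ε ≤ t < ε + δ implying φ(t) < ε. Suppose there exists φ ∈ Φ such that (K1): 0 ≤ f(t,b) − f(t,a) ≤ 9√3·φ(b−a) for all t ∈ [0,1] and a ≤ b; and (K2): there exists x₀ ∈ C([0,1]) with x₀(t) ≤ ∫₀¹ G(t,s) f(s, x₀(s)) ds for all t ∈ [0,1]. Then the integral equation x(t) = ∫₀¹ G(t,s) f(s, x(s)) ds has a unique solution x ∈ C([0,1]) (equivalently, the BVP x''' + f(t,x) = 0, x(0) = x(1) = x''(0) = 0 has a unique solution). -/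

import Mathlib

noncomputable def G (t s : ℝ) : ℝ :=
  if s ≤ t then (1 - t) * (t - s ^ 2) / 2 else t * (1 - s) ^ 2 / 2

lemma Gcont : Continuous fun p : ℝ × ℝ => G p.1 p.2 := by
  unfold G
  exact Continuous.if_le (by fun_prop) (by fun_prop) continuous_snd continuous_fst
    (by intro p h; rw [h]; ring)

lemma GtcontS (t : ℝ) : Continuous (G t) := by
  unfold G
  exact Continuous.if_le (by fun_prop) (by fun_prop) continuous_id continuous_const
    (by intro s h; rw [h]; ring)

lemma Gnonneg {t s : ℝ} (ht : t ∈ Set.Icc (0:ℝ) 1) (hs : s ∈ Set.Icc (0:ℝ) 1) :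
    0 ≤ G t s := by
  obtain ⟨ht0, ht1⟩ := ht; obtain ⟨hs0, hs1⟩ := hs
  unfold G
  split_ifs with h
  · have h1 : s ^ 2 ≤ t := by nlinarith
    have := sub_nonneg.mpr ht1
    have := sub_nonneg.mpr h1
    positivity
  · have := sub_nonneg.mpr hs1
    positivity

lemma Gint {t : ℝ} (ht : t ∈ Set.Icc (0:ℝ) 1) :
    (∫ s in (0:ℝ)..1, G t s) = (t - t ^ 3) / 6 := by
  obtain ⟨ht0, ht1⟩ := ht
  have h1 : (∫ s in (0:ℝ)..t, G t s) = (1 - t) * (t * t - t ^ 3 / 3) / 2 := by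
    rw [intervalIntegral.integral_congr (g := fun s => (1 - t) * (t - s ^ 2) / 2)
      (by intro s hs
          rw [Set.uIcc_of_le ht0] at hs
          simp only [G, if_pos hs.2])]
    rw [intervalIntegral.integral_eq_sub_of_hasDerivAt
      (f := fun s => (1 - t) * (t * s - s ^ 3 / 3) / 2)
      (fun s _ => by
        have h := (((hasDerivAt_id s).const_mul t).sub ((hasDerivAt_pow 3 s).div_const 3)).const_mul
          ((1 - t)) |>.div_const 2
        refine h.congr_deriv ?_; push_cast; ring)
      (by apply Continuous.intervalIntegrable; fun_prop)]
    ring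
  have h2 : (∫ s in t..1, G t s) = (-(t * (1 - 1) ^ 3 / 6)) - (-(t * (1 - t) ^ 3 / 6)) := by
    rw [intervalIntegral.integral_congr (g := fun s => t * (1 - s) ^ 2 / 2)
      (by intro s hs
          rw [Set.uIcc_of_le ht1] at hs
          unfold G; split_ifs with h
          · have hst : s = t := le_antisymm h hs.1
            rw [hst]; ring
          · rfl)]
    rw [intervalIntegral.integral_eq_sub_of_hasDerivAt
      (f := fun s => -(t * (1 - s) ^ 3 / 6))
      (fun s _ => by
        have h := (((hasDerivAt_id s).const_sub 1).pow 3).const_mul t |>.div_const 6 |>.neg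
        refine h.congr_deriv ?_; simp only [id_eq]; push_cast; ring)
      (by apply Continuous.intervalIntegrable; fun_prop)]
  rw [← intervalIntegral.integral_add_adjacent_intervals
    (a := (0:ℝ)) (b := t) (c := 1) ((GtcontS t).intervalIntegrable _ _)
    ((GtcontS t).intervalIntegrable _ _)]
  rw [h1, h2]; ring

lemma Gint_le {t : ℝ} (ht : t ∈ Set.Icc (0:ℝ) 1) :
    (t - t ^ 3) / 6 ≤ Real.sqrt 3 / 27 := by
  obtain ⟨ht0, ht1⟩ := ht
  set u := Real.sqrt 3 with hu
  have hs : u ^ 2 = 3 := Real.sq_sqrt (by norm_num)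
  have hs0 : 0 < u := Real.sqrt_pos.mpr (by norm_num)
  have hA : (u*t-1)^2*(u*t+2) = u^2*(u*t^3) - 3*(u*t) + 2 := by ring
  rw [hs] at hA
  have hprod : 0 ≤ (u*t-1)^2*(u*t+2) :=
    mul_nonneg (sq_nonneg _) (by positivity)
  rw [hA] at hprod
  have key : 9 * (u * (t - t^3)) ≤ 6 := by nlinarith
  have key2 := mul_le_mul_of_nonneg_left key hs0.le
  nlinarith [key2, hs]

lemma matkowski {X : Type*} [MetricSpace X] [CompleteSpace X] [Nonempty X] (T : X → X)
    (φ : ℝ → ℝ) (hφmono : MonotoneOn φ (Set.Ici 0))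
    (hφMK : ∀ ε > (0:ℝ), ∃ δ > (0:ℝ), ∀ t : ℝ, ε ≤ t → t < ε + δ → φ t < ε)
    (hT : ∀ x y : X, dist (T x) (T y) ≤ φ (dist x y)) :
    ∃ x : X, T x = x ∧ ∀ y : X, T y = y → y = x := by
  have hlt : ∀ t : ℝ, 0 < t → φ t < t := fun t ht => by
    obtain ⟨δ, hδ, h⟩ := hφMK t ht
    exact h t le_rfl (by linarith)
  have hle : ∀ t : ℝ, 0 ≤ t → φ t ≤ t := by
    intro t ht
    rcases eq_or_lt_of_le ht with h | h
    · rw [← h]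
      by_contra hc
      push_neg at hc
      have h1 : φ 0 ≤ φ (φ 0 / 2) :=
        hφmono (Set.mem_Ici.mpr le_rfl) (Set.mem_Ici.mpr (by linarith)) (by linarith)
      have h2 := hlt (φ 0 / 2) (by linarith)
      linarith
    · exact (hlt t h).le
  have hT1 : ∀ x y : X, dist (T x) (T y) ≤ dist x y := fun x y =>
    (hT x y).trans (hle _ dist_nonneg)
  have hTcont : Continuous T :=
    LipschitzWith.continuous (K := 1) (fun x y => by
      rw [edist_dist, edist_dist]
      simp only [ENNReal.coe_one, one_mul]
      exact ENNReal.ofReal_le_ofReal (hT1 x y))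
  obtain ⟨x₀⟩ := ‹Nonempty X›
  set u : ℕ → X := fun n => T^[n] x₀ with hu
  have hstep : ∀ n, u (n + 1) = T (u n) := fun n => Function.iterate_succ_apply' T n x₀
  set d : ℕ → ℝ := fun n => dist (u n) (u (n + 1)) with hd
  have hdnn : ∀ n, 0 ≤ d n := fun n => dist_nonneg
  have hdsucc : ∀ n, d (n + 1) ≤ φ (d n) := fun n => by
    simp only [hd, hstep]
    exact hT _ _
  have hdsmall : ∀ δ > (0:ℝ), ∃ N, d N < δ := by
    intro δ hδ
    by_contra hc
    push_neg at hc
    have hbdd : BddBelow (Set.range d) := ⟨0, by rintro _ ⟨n, rfl⟩; exact hdnn n⟩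
    set L := ⨅ n, d n with hL
    have hLle : ∀ n, L ≤ d n := fun n => ciInf_le hbdd n
    have hLge : δ ≤ L := le_ciInf fun n => hc n
    obtain ⟨δ', hδ', hm⟩ := hφMK L (lt_of_lt_of_le hδ hLge)
    obtain ⟨n, hn⟩ : ∃ n, d n < L + δ' := by
      by_contra hc2
      push_neg at hc2
      have : L + δ' ≤ L := le_ciInf hc2
      linarith
    have h1 : φ (d n) < L := hm (d n) (hLle n) hn
    have := (hLle (n + 1)).trans (hdsucc n)
    linarith
  have hcauchy : CauchySeq u := by
    rw [Metric.cauchySeq_iff']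
    intro ε hε
    obtain ⟨δ, hδ, hm⟩ := hφMK (ε / 2) (by linarith)
    set δ' := min δ (ε / 2) with hδ'
    have hδ'0 : 0 < δ' := lt_min hδ (by linarith)
    obtain ⟨N, hN⟩ := hdsmall δ' hδ'0
    refine ⟨N, fun n hn => ?_⟩
    obtain ⟨k, rfl⟩ := Nat.exists_eq_add_of_le hn
    have claim : ∀ k, dist (u N) (u (N + k)) < ε / 2 + δ' := by
      intro k
      induction k with
      | zero => simpa using by linarith
      | succ k ih =>
        have hkey : dist (u (N + 1)) (u (N + k + 1)) < ε / 2 := by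
          rw [hstep, hstep]
          rcases lt_or_ge (dist (u N) (u (N + k))) (ε / 2) with h | h
          · exact lt_of_le_of_lt ((hT _ _).trans (hle _ dist_nonneg)) h
          · have : φ (dist (u N) (u (N + k))) < ε / 2 :=
              hm _ h (by have := min_le_left δ (ε/2); linarith [ih])
            exact lt_of_le_of_lt (hT _ _) this
        calc dist (u N) (u (N + (k + 1)))
            ≤ dist (u N) (u (N + 1)) + dist (u (N + 1)) (u (N + k + 1)) := by
              rw [show N + (k + 1) = N + k + 1 by ring]
              exact dist_triangle _ _ _
          _ < δ' + ε / 2 := add_lt_add_of_lt_of_lt hN hkey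
          _ = ε / 2 + δ' := by ring
    have := claim k
    rw [dist_comm]
    have hδ'le : δ' ≤ ε / 2 := min_le_right _ _
    linarith
  obtain ⟨x, hx⟩ := cauchySeq_tendsto_of_complete hcauchy
  have hTx : T x = x := by
    have h1 : Filter.Tendsto (fun n => u (n + 1)) Filter.atTop (nhds x) :=
      hx.comp (Filter.tendsto_add_atTop_nat 1)
    have h2 : Filter.Tendsto (fun n => T (u n)) Filter.atTop (nhds (T x)) :=
      (hTcont.tendsto x).comp hx
    have h3 : (fun n => u (n + 1)) = fun n => T (u n) := funext hstep
    rw [h3] at h1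
    exact tendsto_nhds_unique h2 h1
  refine ⟨x, hTx, fun y hy => ?_⟩
  by_contra hne
  have hpos : 0 < dist y x := dist_pos.mpr hne
  have : dist y x ≤ φ (dist y x) := by
    conv_lhs => rw [← hy, ← hTx]
    exact hT y x
  linarith [hlt _ hpos]

abbrev I01 := Set.Icc (0:ℝ) 1

noncomputable def extI (x : C(I01, ℝ)) : ℝ → ℝ := fun s => x (Set.projIcc 0 1 zero_le_one s)

lemma extI_cont (x : C(I01, ℝ)) : Continuous (extI x) :=
  x.continuous.comp continuous_projIcc

lemma extI_eq (x : C(I01, ℝ)) {s : ℝ} (hs : s ∈ I01) : extI x s = x ⟨s, hs⟩ := by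
  unfold extI; rw [Set.projIcc_of_mem]

lemma extI_dist_le (x y : C(I01, ℝ)) (s : ℝ) : |extI x s - extI y s| ≤ dist x y := by
  rw [← Real.dist_eq]
  exact ContinuousMap.dist_apply_le_dist _

section Op
variable (f : ℝ → ℝ → ℝ) (hf : Continuous fun p : ℝ × ℝ => f p.1 p.2)

include hf in
lemma Tcont (x : C(I01, ℝ)) :
    Continuous fun t : ℝ => ∫ s in (0:ℝ)..1, G t s * f s (extI x s) := by
  apply intervalIntegral.continuous_parametric_intervalIntegral_of_continuous'
  show Continuous fun p : ℝ × ℝ => G p.1 p.2 * f p.2 (extI x p.2)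
  exact Gcont.mul (hf.comp (continuous_snd.prodMk ((extI_cont x).comp continuous_snd)))

noncomputable def Tmap (x : C(I01, ℝ)) : C(I01, ℝ) :=
  ⟨fun t => ∫ s in (0:ℝ)..1, G t.1 s * f s (extI x s),
    (Tcont f hf x).comp continuous_subtype_val⟩

end Op

theorem stmt_19 (f : ℝ → ℝ → ℝ) (hf : Continuous fun p : ℝ × ℝ => f p.1 p.2)
    (φ : ℝ → ℝ) (hφmono : MonotoneOn φ (Set.Ici 0))
    (hφnn : ∀ t : ℝ, 0 ≤ t → 0 ≤ φ t)
    (hφMK : ∀ ε > (0:ℝ), ∃ δ > (0:ℝ), ∀ t : ℝ, ε ≤ t → t < ε + δ → φ t < ε)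
    (hK1 : ∀ t ∈ Set.Icc (0:ℝ) 1, ∀ a b : ℝ, a ≤ b →
      0 ≤ f t b - f t a ∧ f t b - f t a ≤ 9 * Real.sqrt 3 * φ (b - a))
    (hK2 : ∃ x₀ : ℝ → ℝ, Continuous x₀ ∧
      ∀ t ∈ Set.Icc (0:ℝ) 1, x₀ t ≤ ∫ s in (0:ℝ)..1, G t s * f s (x₀ s)) :
    ∃ x : ℝ → ℝ, Continuous x ∧
      (∀ t ∈ Set.Icc (0:ℝ) 1, x t = ∫ s in (0:ℝ)..1, G t s * f s (x s)) ∧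
      ∀ y : ℝ → ℝ, Continuous y →
        (∀ t ∈ Set.Icc (0:ℝ) 1, y t = ∫ s in (0:ℝ)..1, G t s * f s (y s)) →
        ∀ t ∈ Set.Icc (0:ℝ) 1, y t = x t := by
  have hsqrt : Real.sqrt 3 * Real.sqrt 3 = 3 := Real.mul_self_sqrt (by norm_num)
  have hsqrt0 : 0 < Real.sqrt 3 := Real.sqrt_pos.mpr (by norm_num)
  -- pointwise Lipschitz-type bound for f
  have hfabs : ∀ s ∈ Set.Icc (0:ℝ) 1, ∀ a b : ℝ,
      |f s a - f s b| ≤ 9 * Real.sqrt 3 * φ |a - b| := by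
    intro s hs a b
    rcases le_total a b with h | h
    · obtain ⟨h1, h2⟩ := hK1 s hs a b h
      rw [abs_sub_comm, abs_of_nonneg h1, abs_sub_comm, abs_of_nonneg (sub_nonneg.mpr h)]
      exact h2
    · obtain ⟨h1, h2⟩ := hK1 s hs b a h
      rw [abs_of_nonneg h1, abs_of_nonneg (sub_nonneg.mpr h)]
      exact h2
  -- contraction estimate
  have hT : ∀ x y : C(I01, ℝ),
      dist (Tmap f hf x) (Tmap f hf y) ≤ φ (dist x y) := by
    intro x y
    rw [ContinuousMap.dist_le (hφnn _ dist_nonneg)]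
    intro t
    have ht : (t : ℝ) ∈ Set.Icc (0:ℝ) 1 := t.2
    set C := 9 * Real.sqrt 3 * φ (dist x y) with hC
    have hC0 : 0 ≤ C := by
      have := hφnn _ (dist_nonneg (x := x) (y := y))
      positivity
    have gx : Continuous fun s => G t.1 s * f s (extI x s) :=
      (GtcontS t.1).mul (hf.comp ((continuous_id.prodMk (extI_cont x))))
    have gy : Continuous fun s => G t.1 s * f s (extI y s) :=
      (GtcontS t.1).mul (hf.comp ((continuous_id.prodMk (extI_cont y))))
    rw [Real.dist_eq]
    have hsub : Tmap f hf x t - Tmap f hf y t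
        = ∫ s in (0:ℝ)..1, (G t.1 s * f s (extI x s) - G t.1 s * f s (extI y s)) :=
      (intervalIntegral.integral_sub (gx.intervalIntegrable _ _)
        (gy.intervalIntegrable _ _)).symm
    rw [hsub]
    have habs := intervalIntegral.abs_integral_le_integral_abs
      (f := fun s => G t.1 s * f s (extI x s) - G t.1 s * f s (extI y s))
      (a := (0:ℝ)) (b := 1) (μ := MeasureTheory.volume) zero_le_one
    refine habs.trans ?_
    have hmono : (∫ s in (0:ℝ)..1, |G t.1 s * f s (extI x s) - G t.1 s * f s (extI y s)|)
        ≤ ∫ s in (0:ℝ)..1, G t.1 s * C := by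
      apply intervalIntegral.integral_mono_on zero_le_one
        ((gx.sub gy).abs.intervalIntegrable _ _)
        (((GtcontS t.1).mul continuous_const).intervalIntegrable _ _)
      intro s hs
      have hGnn := Gnonneg ht hs
      show |G t.1 s * f s (extI x s) - G t.1 s * f s (extI y s)| ≤ G t.1 s * C
      rw [← mul_sub, abs_mul, abs_of_nonneg hGnn]
      apply mul_le_mul_of_nonneg_left _ hGnn
      refine (hfabs s hs _ _).trans ?_
      apply mul_le_mul_of_nonneg_left _ (by positivity)
      exact hφmono (Set.mem_Ici.mpr (abs_nonneg _)) (Set.mem_Ici.mpr dist_nonneg)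
        (extI_dist_le x y s)
    refine hmono.trans ?_
    rw [intervalIntegral.integral_mul_const, Gint ht]
    calc (t.1 - t.1 ^ 3) / 6 * C ≤ Real.sqrt 3 / 27 * C :=
          mul_le_mul_of_nonneg_right (Gint_le ht) hC0
      _ = φ (dist x y) := by rw [hC]; field_simp; nlinarith [hsqrt]
  obtain ⟨xh, hfix, huniq⟩ := matkowski (Tmap f hf) φ hφmono hφMK hT
  refine ⟨extI xh, extI_cont xh, fun t ht => ?_, fun y hy hyeq t ht => ?_⟩
  · rw [extI_eq xh ht]
    conv_lhs => rw [← hfix]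
    rfl
  · -- uniqueness
    set Y : C(I01, ℝ) := ⟨fun t => y t.1, hy.comp continuous_subtype_val⟩ with hY
    have hTY : Tmap f hf Y = Y := by
      apply ContinuousMap.ext
      intro t'
      show (∫ s in (0:ℝ)..1, G t'.1 s * f s (extI Y s)) = y t'.1
      rw [intervalIntegral.integral_congr (g := fun s => G t'.1 s * f s (y s))
        (by intro s hs
            rw [Set.uIcc_of_le zero_le_one] at hs
            simp only [extI_eq Y hs]
            rfl)]
      exact (hyeq t'.1 t'.2).symm
    have := huniq Y hTY
    have happ := congrArg (fun g : C(I01, ℝ) => g ⟨t, ht⟩) this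
    simp only [hY] at happ
    rw [extI_eq xh ht]
    exact happ
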